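/- Let 0 < h ≤ w, let n ≥ 1, and for i = 1,…,n let R_i = [0,w] × [(i−1)h, ih] ⊆ ℝ² be n congruent rectangles stacked between the fixed lines y = 0 and y = nh. Let g₁,…,gₙ be a valid motion of R₁,…,Rₙ such that moreover g_i(t)''(R_i) ⊆ {(x,y) | 0 ≤ y ≤ nh} for all i and all t. Then the pieces are pinned to horizontal sliders for positive time: there exists δ > 0 such that for all t ∈ [0,δ] and all i there is c ∈ ℝ with g_i(t)(x,y) = (x + c, y) for all (x,y) ∈ ℝ². -/

import Mathlib

/-- The Euclidean plane. -/
abbrev Plane := EuclideanSpace ℝ (Fin 2)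

noncomputable def pt (x y : ℝ) : Plane :=
  EuclideanSpace.single 0 x + EuclideanSpace.single 1 y

@[simp] lemma pt_apply0 (x y : ℝ) : pt x y 0 = x := by
  simp [pt, EuclideanSpace.single_apply]
@[simp] lemma pt_apply1 (x y : ℝ) : pt x y 1 = y := by
  simp [pt, EuclideanSpace.single_apply]
lemma eq_pt (v : Plane) : v = pt (v 0) (v 1) := by
  ext j; fin_cases j <;> simp [pt, EuclideanSpace.single_apply]
lemma dist_pt (p q : Plane) : dist p q = Real.sqrt ((p 0 - q 0)^2 + (p 1 - q 1)^2) := by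
  rw [EuclideanSpace.dist_eq]
  congr 1
  rw [Fin.sum_univ_two]
  simp [Real.dist_eq]

lemma coord_dist0 (p q : Plane) : |p 0 - q 0| ≤ dist p q := by
  rw [dist_pt, ← Real.sqrt_sq_eq_abs]
  exact Real.sqrt_le_sqrt (by nlinarith [sq_nonneg (p 1 - q 1)])
lemma coord_dist1 (p q : Plane) : |p 1 - q 1| ≤ dist p q := by
  rw [dist_pt, ← Real.sqrt_sq_eq_abs]
  exact Real.sqrt_le_sqrt (by nlinarith [sq_nonneg (p 0 - q 0)])

lemma dist_sq_pt (p q : Plane) : (dist p q)^2 = (p 0 - q 0)^2 + (p 1 - q 1)^2 := by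
  rw [dist_pt, Real.sq_sqrt (by positivity)]

@[simp] lemma plane_add_apply (a b : Plane) (j : Fin 2) : (a + b) j = a j + b j := rfl
@[simp] lemma plane_sub_apply (a b : Plane) (j : Fin 2) : (a - b) j = a j - b j := rfl
@[simp] lemma plane_smul_apply (r : ℝ) (a : Plane) (j : Fin 2) : (r • a) j = r * a j := rfl

lemma pt_eq_iff (x y : ℝ) (v : Plane) (h0 : v 0 = x) (h1 : v 1 = y) : v = pt x y := by
  rw [eq_pt v, h0, h1]

set_option maxHeartbeats 1000000 in
lemma structure_lemma (w h a : ℝ) (hh : 0 < h) (hhw : h ≤ w)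
    (f : Plane → Plane) (hf : Isometry f)
    (hmove : ∀ p : Plane, p 0 ∈ Set.Icc 0 w → p 1 ∈ Set.Icc (a*h) ((a+1)*h) →
      dist (f p) p ≤ h/100) :
    ∃ c s b0 b1 : ℝ, c^2 + s^2 = 1 ∧ 24/25 ≤ c ∧ |s| ≤ 1/25 ∧ |b0| ≤ h/100 ∧ |b1| ≤ h/100 ∧
      ∀ p : Plane, f p = pt (w/2 + b0 + c*(p 0 - w/2) - s*(p 1 - (a+1/2)*h))
                          ((a+1/2)*h + b1 + s*(p 0 - w/2) + c*(p 1 - (a+1/2)*h)) := by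
  have hw : 0 < w := lt_of_lt_of_le hh hhw
  have hne : h ≠ 0 := ne_of_gt hh
  set z1 : ℝ := (a+1/2)*h with hz1
  set z : Plane := pt (w/2) z1 with hz
  set q1 : Plane := pt (w/2 + h/2) z1 with hq1
  set q2 : Plane := pt (w/2) (z1 + h/2) with hq2
  have hzc0 : z 0 = w/2 := by rw [hz, pt_apply0]
  have hzc1 : z 1 = z1 := by rw [hz, pt_apply1]
  have hq1c0 : q1 0 = w/2 + h/2 := by rw [hq1, pt_apply0]
  have hq1c1 : q1 1 = z1 := by rw [hq1, pt_apply1]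
  have hq2c0 : q2 0 = w/2 := by rw [hq2, pt_apply0]
  have hq2c1 : q2 1 = z1 + h/2 := by rw [hq2, pt_apply1]
  have hzmem := hmove z (by rw [hzc0, Set.mem_Icc]; constructor <;> linarith)
    (by rw [hzc1, hz1, Set.mem_Icc]; constructor <;> nlinarith)
  have hq1mem := hmove q1 (by rw [hq1c0, Set.mem_Icc]; constructor <;> linarith)
    (by rw [hq1c1, hz1, Set.mem_Icc]; constructor <;> nlinarith)
  have hq2mem := hmove q2 (by rw [hq2c0, Set.mem_Icc]; constructor <;> linarith)
    (by rw [hq2c1, hz1, Set.mem_Icc]; constructor <;> nlinarith)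
  set φ := hf.affineIsometryOfStrictConvexSpace with hφ
  have hL : ∀ p q : Plane, φ.linearIsometry (p - q) = f p - f q := by
    intro p q
    rw [← vsub_eq_sub, AffineIsometry.map_vsub]; rfl
  set c : ℝ := (2/h)*((f q1) 0 - (f z) 0) with hc
  set s : ℝ := (2/h)*((f q1) 1 - (f z) 1) with hs
  set x : ℝ := (2/h)*((f q2) 0 - (f z) 0) with hx
  set y : ℝ := (2/h)*((f q2) 1 - (f z) 1) with hy
  set b0 : ℝ := (f z) 0 - w/2 with hb0
  set b1 : ℝ := (f z) 1 - z1 with hb1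
  have hLe0 : φ.linearIsometry (pt 1 0) = pt c s := by
    have h1 : ((2/h) • (q1 - z) : Plane) = pt 1 0 := by
      apply pt_eq_iff
      · rw [plane_smul_apply, plane_sub_apply, hq1c0, hzc0]; field_simp; ring
      · rw [plane_smul_apply, plane_sub_apply, hq1c1, hzc1]; ring
    rw [← h1, map_smul, hL]
    apply pt_eq_iff
    · rw [plane_smul_apply, plane_sub_apply, hc]
    · rw [plane_smul_apply, plane_sub_apply, hs]
  have hLe1 : φ.linearIsometry (pt 0 1) = pt x y := by
    have h1 : ((2/h) • (q2 - z) : Plane) = pt 0 1 := by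
      apply pt_eq_iff
      · rw [plane_smul_apply, plane_sub_apply, hq2c0, hzc0]; ring
      · rw [plane_smul_apply, plane_sub_apply, hq2c1, hzc1]; field_simp; ring
    rw [← h1, map_smul, hL]
    apply pt_eq_iff
    · rw [plane_smul_apply, plane_sub_apply, hx]
    · rw [plane_smul_apply, plane_sub_apply, hy]
  have hd1 : ((f q1) 0 - (f z) 0)^2 + ((f q1) 1 - (f z) 1)^2 = (h/2)^2 := by
    have h2 := dist_sq_pt (f q1) (f z)
    rw [hf.dist_eq, dist_sq_pt, hq1c0, hq1c1, hzc0, hzc1] at h2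
    rw [← h2]; ring
  have hd2 : ((f q2) 0 - (f z) 0)^2 + ((f q2) 1 - (f z) 1)^2 = (h/2)^2 := by
    have h2 := dist_sq_pt (f q2) (f z)
    rw [hf.dist_eq, dist_sq_pt, hq2c0, hq2c1, hzc0, hzc1] at h2
    rw [← h2]; ring
  have hd3 : ((f q1) 0 - (f q2) 0)^2 + ((f q1) 1 - (f q2) 1)^2 = (h/2)^2 + (h/2)^2 := by
    have h2 := dist_sq_pt (f q1) (f q2)
    rw [hf.dist_eq, dist_sq_pt, hq1c0, hq1c1, hq2c0, hq2c1] at h2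
    rw [← h2]; ring
  have hcs : c^2 + s^2 = 1 := by
    rw [hc, hs]; field_simp; linear_combination (4:ℝ) * hd1
  have hxy : x^2 + y^2 = 1 := by
    rw [hx, hy]; field_simp; linear_combination (4:ℝ) * hd2
  have horth : c*x + s*y = 0 := by
    have h4 : (c - x)^2 + (s - y)^2 = 2 := by
      rw [hc, hs, hx, hy]
      have e1 : (2/h*((f q1) 0 - (f z) 0) - 2/h*((f q2) 0 - (f z) 0))
          = (2/h) * ((f q1) 0 - (f q2) 0) := by ring
      have e2 : (2/h*((f q1) 1 - (f z) 1) - 2/h*((f q2) 1 - (f z) 1))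
          = (2/h) * ((f q1) 1 - (f q2) 1) := by ring
      rw [e1, e2]
      field_simp
      linear_combination (2:ℝ) * hd3
    linear_combination (1/2:ℝ)*hcs + (1/2:ℝ)*hxy - (1/2:ℝ)*h4
  have hAz0 : |(f z) 0 - z 0| ≤ h/100 := (coord_dist0 _ _).trans hzmem
  have hAz1 : |(f z) 1 - z 1| ≤ h/100 := (coord_dist1 _ _).trans hzmem
  have hA10 : |(f q1) 0 - q1 0| ≤ h/100 := (coord_dist0 _ _).trans hq1mem
  have hA11 : |(f q1) 1 - q1 1| ≤ h/100 := (coord_dist1 _ _).trans hq1mem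
  have hA20 : |(f q2) 0 - q2 0| ≤ h/100 := (coord_dist0 _ _).trans hq2mem
  have hA21 : |(f q2) 1 - q2 1| ≤ h/100 := (coord_dist1 _ _).trans hq2mem
  have habs : ∀ u v : ℝ, |u| ≤ h/100 → |v| ≤ h/100 → |u - v| ≤ h/50 := by
    intro u v hu hv
    calc |u - v| ≤ |u| + |v| := abs_sub _ _
    _ ≤ h/50 := by linarith
  have hfrac : 2/h * (h/50) = 1/25 := by field_simp; ring
  have key : ∀ u v : ℝ, |u| ≤ h/100 → |v| ≤ h/100 → |(2/h) * (u - v)| ≤ 1/25 := by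
    intro u v hu hv
    rw [abs_mul, abs_of_nonneg (by positivity : (0:ℝ) ≤ 2/h)]
    rw [← hfrac]
    exact mul_le_mul_of_nonneg_left (habs _ _ hu hv) (by positivity)
  have hc1 : |c - 1| ≤ 1/25 := by
    have e1 : c - 1 = (2/h) * (((f q1) 0 - q1 0) - ((f z) 0 - z 0)) := by
      rw [hc, hq1c0, hzc0]; field_simp; ring
    rw [e1]; exact key _ _ hA10 hAz0
  have hs1 : |s| ≤ 1/25 := by
    have e1 : s = (2/h) * (((f q1) 1 - q1 1) - ((f z) 1 - z 1)) := by
      rw [hs, hq1c1, hzc1]; ring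
    rw [e1]; exact key _ _ hA11 hAz1
  have hx1 : |x| ≤ 1/25 := by
    have e1 : x = (2/h) * (((f q2) 0 - q2 0) - ((f z) 0 - z 0)) := by
      rw [hx, hq2c0, hzc0]; ring
    rw [e1]; exact key _ _ hA20 hAz0
  have hy1 : |y - 1| ≤ 1/25 := by
    have e1 : y - 1 = (2/h) * (((f q2) 1 - q2 1) - ((f z) 1 - z 1)) := by
      rw [hy, hq2c1, hzc1]; field_simp; ring
    rw [e1]; exact key _ _ hA21 hAz1
  have hcge : 24/25 ≤ c := by have := abs_le.mp hc1; linarith [this.1]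
  have hyge : 24/25 ≤ y := by have := abs_le.mp hy1; linarith [this.1]
  have hyc : y = c := by
    have h9 : c^2 - y^2 = 0 := by
      linear_combination (c*x - s*y) * horth - c^2*hxy + y^2*hcs
    have h10 : (c - y) * (c + y) = 0 := by linear_combination h9
    rcases mul_eq_zero.mp h10 with h11 | h11
    · linarith
    · linarith
  have hxs : x = -s := by
    have hcne : c ≠ 0 := by intro h0; rw [h0] at hcge; norm_num at hcge
    have h12 : c * x = c * (-s) := by rw [hyc] at horth; linarith
    exact mul_left_cancel₀ hcne h12
  refine ⟨c, s, b0, b1, hcs, hcge, hs1, ?_, ?_, ?_⟩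
  · rw [hb0, ← hzc0]; exact hAz0
  · rw [hb1, ← hzc1]; exact hAz1
  · intro p
    have hdec : p - z = (p 0 - w/2) • (pt 1 0 : Plane) + (p 1 - z1) • pt 0 1 := by
      have e1 : p - z = pt (p 0 - w/2) (p 1 - z1) := by
        apply pt_eq_iff
        · rw [plane_sub_apply, hzc0]
        · rw [plane_sub_apply, hzc1]
      rw [e1]
      apply (pt_eq_iff _ _ _ ?_ ?_).symm
      · simp only [plane_add_apply, plane_smul_apply, pt_apply0, pt_apply1]; ring
      · simp only [plane_add_apply, plane_smul_apply, pt_apply0, pt_apply1]; ring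
    have h5 : f p - f z = (p 0 - w/2) • (pt c s : Plane) + (p 1 - z1) • pt (-s) c := by
      rw [← hL p z, hdec, map_add, map_smul, map_smul, hLe0, hLe1, hxs, hyc]
    have h6 : f p = f z + ((p 0 - w/2) • (pt c s : Plane) + (p 1 - z1) • pt (-s) c) := by
      rw [← h5]; abel
    rw [h6]
    apply pt_eq_iff
    · simp only [plane_add_apply, plane_smul_apply, pt_apply0, pt_apply1]
      rw [show (f z) 0 = w/2 + b0 from by rw [hb0]; ring]
      ring
    · simp only [plane_add_apply, plane_smul_apply, pt_apply0, pt_apply1]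
      rw [show (f z) 1 = z1 + b1 from by rw [hb1]; ring]
      ring

lemma pt_congr {x x' y y' : ℝ} (hx : x = x') (hy : y = y') : pt x y = pt x' y' := by
  rw [hx, hy]

lemma mem_interior_box (w h a x y : ℝ) (hx0 : 0 < x) (hxw : x < w)
    (hy0 : a*h < y) (hy1 : y < (a+1)*h) :
    pt x y ∈ interior {p : Plane | p 0 ∈ Set.Icc 0 w ∧ p 1 ∈ Set.Icc (a*h) ((a+1)*h)} := by
  set r : ℝ := min (min x (w-x)) (min (y - a*h) ((a+1)*h - y)) with hr
  have hrpos : 0 < r := by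
    apply lt_min (lt_min hx0 (by linarith)) (lt_min (by linarith) (by linarith))
  apply mem_interior.mpr
  refine ⟨Metric.ball (pt x y) r, ?_, Metric.isOpen_ball, Metric.mem_ball_self hrpos⟩
  intro q hq
  rw [Metric.mem_ball] at hq
  have h0 : |q 0 - x| < r := lt_of_le_of_lt (by
    have := coord_dist0 q (pt x y); rwa [pt_apply0] at this) hq
  have h1 : |q 1 - y| < r := lt_of_le_of_lt (by
    have := coord_dist1 q (pt x y); rwa [pt_apply1] at this) hq
  rw [abs_lt] at h0 h1
  have hr1 : r ≤ x := le_trans (min_le_left _ _) (min_le_left _ _)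
  have hr2 : r ≤ w - x := le_trans (min_le_left _ _) (min_le_right _ _)
  have hr3 : r ≤ y - a*h := le_trans (min_le_right _ _) (min_le_left _ _)
  have hr4 : r ≤ (a+1)*h - y := le_trans (min_le_right _ _) (min_le_right _ _)
  exact ⟨⟨by linarith [h0.1], by linarith [h0.2]⟩, ⟨by linarith [h1.1], by linarith [h1.2]⟩⟩

lemma exists_endpoint (w h a : ℝ) (hh : 0 < h) (hhw : h ≤ w)
    (f : Plane → Plane) (c s b0 b1 : ℝ) (hcs : c^2 + s^2 = 1) (hcge : 24/25 ≤ c)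
    (hs1 : |s| ≤ 1/25) (hb0 : |b0| ≤ h/100) (hb1 : |b1| ≤ h/100)
    (hform : ∀ p : Plane, f p = pt (w/2 + b0 + c*(p 0 - w/2) - s*(p 1 - (a+1/2)*h))
      ((a+1/2)*h + b1 + s*(p 0 - w/2) + c*(p 1 - (a+1/2)*h)))
    (σ : ℝ) (hσ : σ = 1 ∨ σ = -1) :
    ∃ p : Plane, (p 0 ∈ Set.Icc 0 w ∧ p 1 ∈ Set.Icc (a*h) ((a+1)*h)) ∧
      (f p) 1 = (a+1/2)*h + b1 - s*b0/c + σ * (h/(2*c)) := by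
  have hc0 : 0 < c := by linarith
  have hs' := abs_le.mp hs1
  have hb0' := abs_le.mp hb0
  set α : ℝ := (σ*s*(h/2) - b0)/c with hα
  have hσ2 : σ^2 = 1 := by rcases hσ with h' | h' <;> rw [h'] <;> norm_num
  have hσabs : |σ| = 1 := by rcases hσ with h' | h' <;> rw [h'] <;> norm_num
  have hαabs : |α| ≤ w/2 := by
    rw [hα, abs_div, abs_of_pos hc0, div_le_iff₀ hc0]
    have h2 : |σ*s*(h/2) - b0| ≤ |σ*s*(h/2)| + |b0| := abs_sub _ _
    have h3 : |σ*s*(h/2)| = |s| * (h/2) := by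
      rw [abs_mul, abs_mul, hσabs, one_mul, abs_of_pos (by linarith : (0:ℝ) < h/2)]
    nlinarith [abs_nonneg (σ*s*(h/2) - b0)]
  have hαabs' := abs_le.mp hαabs
  refine ⟨pt (w/2 + α) (a*h + (σ+1)*(h/2)), ⟨?_, ?_⟩, ?_⟩
  · rw [pt_apply0, Set.mem_Icc]
    constructor <;> linarith [hαabs'.1, hαabs'.2]
  · rw [pt_apply1, Set.mem_Icc]
    rcases hσ with h' | h' <;> rw [h'] <;> constructor <;> nlinarith
  · rw [hform, pt_apply1, pt_apply0, pt_apply1]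
    have hcne : c ≠ 0 := ne_of_gt hc0
    rw [hα]
    field_simp
    linear_combination (h*σ) * hcs

set_option maxHeartbeats 1000000 in
lemma mem_interior_slice (w h a : ℝ) (hh : 0 < h) (hhw : h ≤ w)
    (f : Plane → Plane) (hf : Isometry f) (c s b0 b1 : ℝ)
    (hcs : c^2 + s^2 = 1) (hcge : 24/25 ≤ c)
    (hs1 : |s| ≤ 1/25) (hb0 : |b0| ≤ h/100) (hb1 : |b1| ≤ h/100)
    (hform : ∀ p : Plane, f p = pt (w/2 + b0 + c*(p 0 - w/2) - s*(p 1 - (a+1/2)*h))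
      ((a+1/2)*h + b1 + s*(p 0 - w/2) + c*(p 1 - (a+1/2)*h)))
    (y : ℝ)
    (hyu : (a+1/2)*h + b1 - s*b0/c - h/(2*c) < y)
    (hyv : y < (a+1/2)*h + b1 - s*b0/c + h/(2*c)) :
    pt (w/2) y ∈
      interior (f '' {p : Plane | p 0 ∈ Set.Icc 0 w ∧ p 1 ∈ Set.Icc (a*h) ((a+1)*h)}) := by
  have hc0 : 0 < c := by linarith
  have hcne : c ≠ 0 := ne_of_gt hc0
  have hcle1 : c ≤ 1 := by nlinarith [sq_nonneg s]
  set T : ℝ := y - (a+1/2)*h - b1 with hT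
  set finv : Plane → Plane := fun q =>
    pt (w/2 + c*(q 0 - w/2 - b0) + s*(q 1 - (a+1/2)*h - b1))
       ((a+1/2)*h - s*(q 0 - w/2 - b0) + c*(q 1 - (a+1/2)*h - b1)) with hfinv
  have hli : Function.LeftInverse finv f := by
    intro p
    have e : finv (f p) = pt (p 0) (p 1) := by
      rw [hform p, hfinv]
      simp only [pt_apply0, pt_apply1]
      exact pt_congr (by linear_combination (p 0 - w/2) * hcs)
        (by linear_combination (p 1 - (a+1/2)*h) * hcs)
    rw [e, ← eq_pt]
  have hri : Function.RightInverse finv f := by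
    intro q
    have e : f (finv q) = pt (q 0) (q 1) := by
      rw [hfinv]
      simp only []
      rw [hform, pt_apply0, pt_apply1]
      exact pt_congr (by linear_combination (q 0 - w/2 - b0) * hcs)
        (by linear_combination (q 1 - (a+1/2)*h - b1) * hcs)
    rw [e, ← eq_pt]
  set Fequiv : Plane ≃ᵢ Plane := ⟨⟨f, finv, hli, hri⟩, hf⟩ with hFe
  set S : Set Plane := {p : Plane | p 0 ∈ Set.Icc 0 w ∧ p 1 ∈ Set.Icc (a*h) ((a+1)*h)}
    with hS
  -- bounds
  have hs' := abs_le.mp hs1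
  have hb0' := abs_le.mp hb0
  have hcu : 0 < c * (y - ((a+1/2)*h + b1 - s*b0/c - h/(2*c))) :=
    mul_pos hc0 (by linarith)
  have hcv : 0 < c * (((a+1/2)*h + b1 - s*b0/c + h/(2*c)) - y) :=
    mul_pos hc0 (by linarith)
  have ecu : c * (y - ((a+1/2)*h + b1 - s*b0/c - h/(2*c))) = c*T + s*b0 + h/2 := by
    rw [hT]; field_simp; ring
  have ecv : c * (((a+1/2)*h + b1 - s*b0/c + h/(2*c)) - y) = -(c*T) - s*b0 + h/2 := by
    rw [hT]; field_simp; ring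
  have h1 : -(s*b0) - h/2 < c*T := by rw [ecu] at hcu; linarith
  have h2 : c*T < -(s*b0) + h/2 := by rw [ecv] at hcv; linarith
  have habs1 : |s*b0| ≤ h/2500 := by
    rw [abs_mul]
    calc |s| * |b0| ≤ (1/25)*(h/100) :=
      mul_le_mul hs1 hb0 (abs_nonneg _) (by norm_num)
    _ = h/2500 := by ring
  have habs1' := abs_le.mp habs1
  have hCT : |c*T| ≤ h/2 + h/2500 := by
    rw [abs_le]; constructor <;> linarith
  have habs3 : |s*(c*T)| ≤ (1/25)*(h/2 + h/2500) := by
    rw [abs_mul]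
    exact mul_le_mul hs1 hCT (abs_nonneg _) (by norm_num)
  have habs3' := abs_le.mp habs3
  have habs2 : |c*(c*b0)| ≤ h/100 := by
    rw [abs_mul, abs_mul, abs_of_pos hc0]
    nlinarith [abs_nonneg b0, abs_le.mp hb0]
  have habs2' := abs_le.mp habs2
  have hcw : 12*h/25 ≤ c*(w/2) := by nlinarith
  -- the preimage point
  have hP0 : 0 < w/2 - c*b0 + s*T := by
    have e3 : c*(w/2 - c*b0 + s*T) = c*(w/2) - c*(c*b0) + s*(c*T) := by ring
    have : 0 < c*(w/2 - c*b0 + s*T) := by rw [e3]; linarith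
    have e4 : w/2 - c*b0 + s*T = (c*(w/2 - c*b0 + s*T))/c := by field_simp
    rw [e4]; exact div_pos this hc0
  have hP0w : w/2 - c*b0 + s*T < w := by
    have e3 : c*(w - (w/2 - c*b0 + s*T)) = c*(w/2) + c*(c*b0) - s*(c*T) := by ring
    have h5 : 0 < c*(w - (w/2 - c*b0 + s*T)) := by rw [e3]; linarith
    have e4 : w - (w/2 - c*b0 + s*T) = (c*(w - (w/2 - c*b0 + s*T)))/c := by
      field_simp
    have : 0 < w - (w/2 - c*b0 + s*T) := by rw [e4]; exact div_pos h5 hc0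
    linarith
  have hP1a : a*h < (a+1/2)*h + s*b0 + c*T := by nlinarith
  have hP1b : (a+1/2)*h + s*b0 + c*T < (a+1)*h := by nlinarith
  have hPint : pt (w/2 - c*b0 + s*T) ((a+1/2)*h + s*b0 + c*T) ∈ interior S := by
    rw [hS]
    exact mem_interior_box w h a _ _ hP0 hP0w hP1a hP1b
  have hfP : f (pt (w/2 - c*b0 + s*T) ((a+1/2)*h + s*b0 + c*T)) = pt (w/2) y := by
    rw [hform, pt_apply0, pt_apply1]
    exact pt_congr (by linear_combination (-b0) * hcs)
      (by rw [hT]; linear_combination (y - (a+1/2)*h - b1) * hcs)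
  have himg : Fequiv.toHomeomorph '' interior S = interior (Fequiv.toHomeomorph '' S) :=
    Homeomorph.image_interior _ _
  have : pt (w/2) y ∈ Fequiv.toHomeomorph '' interior S :=
    ⟨_, hPint, hfP⟩
  rw [himg] at this
  exact this

lemma box_compact (w h a : ℝ) :
    IsCompact {p : Plane | p 0 ∈ Set.Icc 0 w ∧ p 1 ∈ Set.Icc (a*h) ((a+1)*h)} := by
  have hcont : Continuous (fun q : ℝ × ℝ => pt q.1 q.2) := by
    have e : (fun q : ℝ × ℝ => pt q.1 q.2)
        = fun q : ℝ × ℝ => q.1 • (pt 1 0 : Plane) + q.2 • pt 0 1 := by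
      funext q
      refine (pt_eq_iff _ _ _ ?_ ?_).symm
      · simp only [plane_add_apply, plane_smul_apply, pt_apply0, pt_apply1]; ring
      · simp only [plane_add_apply, plane_smul_apply, pt_apply0, pt_apply1]; ring
    rw [e]
    exact ((continuous_fst.smul continuous_const).add (continuous_snd.smul continuous_const))
  have himg : {p : Plane | p 0 ∈ Set.Icc 0 w ∧ p 1 ∈ Set.Icc (a*h) ((a+1)*h)}
      = (fun q : ℝ × ℝ => pt q.1 q.2) '' (Set.Icc 0 w ×ˢ Set.Icc (a*h) ((a+1)*h)) := by
    ext p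
    constructor
    · rintro ⟨h1, h2⟩
      exact ⟨(p 0, p 1), ⟨h1, h2⟩, (eq_pt p).symm⟩
    · rintro ⟨q, ⟨hq1, hq2⟩, he⟩
      have he' : pt q.1 q.2 = p := he
      rw [← he']
      exact ⟨by rw [pt_apply0]; exact hq1, by rw [pt_apply1]; exact hq2⟩
  rw [himg]
  exact (isCompact_Icc.prod isCompact_Icc).image hcont

lemma small_motion_one (f : unitInterval → Plane → Plane)
    (hcont : Continuous fun q : unitInterval × Plane => f q.1 q.2)
    (hid : f 0 = id) (K : Set Plane) (hK : IsCompact K) (ε : ℝ) (hε : 0 < ε) :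
    ∃ δ : ℝ, 0 < δ ∧ ∀ t : unitInterval, (t : ℝ) ≤ δ → ∀ p ∈ K, dist (f t p) p ≤ ε := by
  set D : Set (unitInterval × Plane) :=
    {q | q.2 ∈ K ∧ ε ≤ dist (f q.1 q.2) q.2} with hD
  have hDclosed : IsClosed D := by
    apply IsClosed.inter
    · exact hK.isClosed.preimage continuous_snd
    · exact isClosed_le continuous_const (hcont.dist continuous_snd)
  have hDsub : D ⊆ (Set.univ : Set unitInterval) ×ˢ K := by
    rintro ⟨t, p⟩ ⟨h1, _⟩
    exact ⟨Set.mem_univ _, h1⟩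
  have hDcomp : IsCompact D :=
    (isCompact_univ.prod hK).of_isClosed_subset hDclosed hDsub
  set T : Set ℝ := (fun q : unitInterval × Plane => (q.1 : ℝ)) '' D with hT
  have hTcomp : IsCompact T := hDcomp.image (continuous_subtype_val.comp continuous_fst)
  rcases T.eq_empty_or_nonempty with hemp | hne
  · refine ⟨1, one_pos, fun t ht p hp => ?_⟩
    by_contra hcon
    have : (t : ℝ) ∈ T := ⟨(t, p), ⟨hp, le_of_lt (not_le.mp hcon)⟩, rfl⟩
    rw [hemp] at this
    exact this
  · have hmem := hTcomp.sInf_mem hne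
    obtain ⟨q, hqD, hq1⟩ := hmem
    have hnonneg : 0 ≤ sInf T := by rw [← hq1]; exact q.1.2.1
    have hnz : sInf T ≠ 0 := by
      intro h0
      have hcoe : (q.1 : ℝ) = 0 := by rw [← h0, ← hq1]
      have hq0 : q.1 = 0 := Subtype.ext (by rw [hcoe]; rfl)
      have := hqD.2
      rw [hq0, hid] at this
      simp at this
      linarith
    have hpos : 0 < sInf T := lt_of_le_of_ne hnonneg (Ne.symm hnz)
    refine ⟨sInf T / 2, by linarith, fun t ht p hp => ?_⟩
    by_contra hcon
    have htT : (t : ℝ) ∈ T := ⟨(t, p), ⟨hp, le_of_lt (not_le.mp hcon)⟩, rfl⟩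
    have := csInf_le hTcomp.bddBelow htT
    linarith


/-- A valid motion of the sets `R i`: each `g i t` is an isometry of the plane, `g i 0 = id`,
`(t, x) ↦ g i t x` is continuous, and at every time the interiors of the moved sets are
pairwise disjoint. -/
def IsValidMotion {n : ℕ} (R : Fin n → Set Plane)
    (g : Fin n → unitInterval → Plane → Plane) : Prop :=
  (∀ i t, Isometry (g i t)) ∧
  (∀ i, g i 0 = id) ∧
  (∀ i, Continuous fun q : unitInterval × Plane => g i q.1 q.2) ∧
  ∀ t, Pairwise fun i j => Disjoint (interior (g i t '' R i)) (interior (g j t '' R j))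

set_option maxHeartbeats 1600000

/-- `n` congruent rectangles `[0, w] × [(i-1)h, ih]` (with `0 < h ≤ w`) stacked between the
fixed lines `y = 0` and `y = nh`: in any valid motion that keeps them inside the strip
`0 ≤ y ≤ nh`, the pieces are pinned to horizontal sliders for positive time. -/
theorem stacked_rectangles_pinned_to_horizontal_sliders (w h : ℝ) (hh : 0 < h) (hhw : h ≤ w)
    (n : ℕ) (hn : 1 ≤ n)
    (R : Fin n → Set Plane)
    (hR : ∀ i : Fin n, R i =
      {p : Plane | p 0 ∈ Set.Icc 0 w ∧ p 1 ∈ Set.Icc ((i : ℝ) * h) (((i : ℝ) + 1) * h)})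
    (g : Fin n → unitInterval → Plane → Plane)
    (hvalid : IsValidMotion R g)
    (hsub : ∀ i t, g i t '' R i ⊆ {p : Plane | p 1 ∈ Set.Icc 0 ((n : ℝ) * h)}) :
    ∃ δ : ℝ, 0 < δ ∧ ∀ t : unitInterval, (t : ℝ) ≤ δ →
      ∀ i, ∃ c : ℝ, ∀ p : Plane, g i t p 0 = p 0 + c ∧ g i t p 1 = p 1 := by
  have hw : 0 < w := lt_of_lt_of_le hh hhw
  obtain ⟨hiso, hid, hcont, hdisj⟩ := hvalid
  haveI : Nonempty (Fin n) := ⟨⟨0, hn⟩⟩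
  have hδi : ∀ i : Fin n, ∃ δ : ℝ, 0 < δ ∧ ∀ t : unitInterval, (t:ℝ) ≤ δ →
      ∀ p ∈ R i, dist (g i t p) p ≤ h/100 := by
    intro i
    apply small_motion_one (g i) (hcont i) (hid i) (R i) ?_ _ (by positivity)
    rw [hR i]
    exact box_compact w h _
  choose δf hδpos hδprop using hδi
  refine ⟨Finset.univ.inf' Finset.univ_nonempty δf, ?_, ?_⟩
  · exact (Finset.lt_inf'_iff _).mpr fun i _ => hδpos i
  · intro t ht
    have hdata : ∀ i : Fin n, ∃ c s b0 b1 : ℝ, c^2 + s^2 = 1 ∧ 24/25 ≤ c ∧ |s| ≤ 1/25 ∧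
        |b0| ≤ h/100 ∧ |b1| ≤ h/100 ∧
        ∀ p : Plane, g i t p = pt (w/2 + b0 + c*(p 0 - w/2) - s*(p 1 - ((i:ℝ)+1/2)*h))
          (((i:ℝ)+1/2)*h + b1 + s*(p 0 - w/2) + c*(p 1 - ((i:ℝ)+1/2)*h)) := by
      intro i
      apply structure_lemma w h (i:ℝ) hh hhw (g i t) (hiso i t)
      intro p hp0 hp1
      exact hδprop i t (le_trans ht (Finset.inf'_le _ (Finset.mem_univ i))) p
        (by rw [hR i]; exact ⟨hp0, hp1⟩)
    choose c s b0 b1 hcs hcge hs1 hb0 hb1 hform using hdata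
    obtain ⟨u, hupi⟩ : ∃ u : Fin n → ℝ, ∀ i,
        u i = ((i:ℝ)+1/2)*h + b1 i - s i * b0 i / c i - h/(2*c i) :=
      ⟨fun i => ((i:ℝ)+1/2)*h + b1 i - s i * b0 i / c i - h/(2*c i), fun i => rfl⟩
    obtain ⟨v, hvpi⟩ : ∃ v : Fin n → ℝ, ∀ i,
        v i = ((i:ℝ)+1/2)*h + b1 i - s i * b0 i / c i + h/(2*c i) :=
      ⟨fun i => ((i:ℝ)+1/2)*h + b1 i - s i * b0 i / c i + h/(2*c i), fun i => rfl⟩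
    have hc0 : ∀ i, 0 < c i := fun i => by linarith [hcge i]
    have hcle1 : ∀ i, c i ≤ 1 := fun i => by nlinarith [sq_nonneg (s i), hcs i]
    have hvu : ∀ i, v i - u i = h / c i := by
      intro i
      rw [hupi, hvpi]
      have := (hc0 i).ne'
      field_simp
      ring
    have hhc : ∀ i, h ≤ h / c i := by
      intro i
      rw [le_div_iff₀ (hc0 i)]
      nlinarith [hcle1 i]
    have huv_lt : ∀ i, u i < v i := by
      intro i
      have h3 : h ≤ v i - u i := by rw [hvu i]; exact hhc i
      linarith
    -- strip bounds
    have hstrip : ∀ i : Fin n, (0 ≤ u i ∧ u i ≤ (n:ℝ)*h) ∧ (0 ≤ v i ∧ v i ≤ (n:ℝ)*h) := by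
      intro i
      constructor
      · obtain ⟨p, ⟨hp0, hp1⟩, hp⟩ := exists_endpoint w h (i:ℝ) hh hhw (g i t)
          (c i) (s i) (b0 i) (b1 i) (hcs i) (hcge i) (hs1 i) (hb0 i) (hb1 i) (hform i)
          (-1) (Or.inr rfl)
        have hmem : g i t p ∈ g i t '' R i := ⟨p, by rw [hR i]; exact ⟨hp0, hp1⟩, rfl⟩
        have h3 : (g i t p) 1 ∈ Set.Icc 0 ((n:ℝ)*h) := hsub i t hmem
        rw [Set.mem_Icc] at h3
        rw [hp] at h3
        have h4 : u i = ((i:ℝ)+1/2)*h + b1 i - s i*b0 i/c i + (-1)*(h/(2*c i)) := by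
          rw [hupi]; ring
        constructor <;> linarith [h3.1, h3.2, h4.le, h4.ge]
      · obtain ⟨p, ⟨hp0, hp1⟩, hp⟩ := exists_endpoint w h (i:ℝ) hh hhw (g i t)
          (c i) (s i) (b0 i) (b1 i) (hcs i) (hcge i) (hs1 i) (hb0 i) (hb1 i) (hform i)
          1 (Or.inl rfl)
        have hmem : g i t p ∈ g i t '' R i := ⟨p, by rw [hR i]; exact ⟨hp0, hp1⟩, rfl⟩
        have h3 : (g i t p) 1 ∈ Set.Icc 0 ((n:ℝ)*h) := hsub i t hmem
        rw [Set.mem_Icc] at h3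
        rw [hp] at h3
        have h4 : v i = ((i:ℝ)+1/2)*h + b1 i - s i*b0 i/c i + 1*(h/(2*c i)) := by
          rw [hvpi]; ring
        constructor <;> linarith [h3.1, h3.2, h4.le, h4.ge]
    -- deviation bounds
    have hdev : ∀ i : Fin n, |u i - (i:ℝ)*h| ≤ h/20 ∧ |v i - ((i:ℝ)+1)*h| ≤ h/20 := by
      intro i
      have hcb1 : |c i * b1 i| ≤ h/100 := by
        rw [abs_mul]
        have e1 : |c i| ≤ 1 := abs_le.mpr ⟨by linarith [hc0 i], hcle1 i⟩
        have e2 := mul_le_mul e1 (hb1 i) (abs_nonneg _) (by norm_num : (0:ℝ) ≤ 1)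
        linarith
      have hsb0 : |s i * b0 i| ≤ h/2500 := by
        rw [abs_mul]
        have e2 := mul_le_mul (hs1 i) (hb0 i) (abs_nonneg _) (by norm_num : (0:ℝ) ≤ 1/25)
        linarith
      have hcb1' := abs_le.mp hcb1
      have hsb0' := abs_le.mp hsb0
      have hch : 24/25*h ≤ c i * h ∧ c i * h ≤ h :=
        ⟨by nlinarith [hcge i], by nlinarith [hcle1 i]⟩
      have key : ∀ X : ℝ, |c i * X| ≤ h/25 → |X| ≤ h/20 := by
        intro X hX
        rw [abs_mul, abs_of_pos (hc0 i)] at hX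
        nlinarith [mul_le_mul_of_nonneg_right (hcge i) (abs_nonneg X)]
      constructor
      · apply key
        have e : c i * (u i - (i:ℝ)*h) = c i*h/2 + c i*b1 i - s i*b0 i - h/2 := by
          rw [hupi]
          have := (hc0 i).ne'
          field_simp
          ring
        rw [e, abs_le]
        constructor <;> linarith [hch.1, hch.2]
      · apply key
        have e : c i * (v i - ((i:ℝ)+1)*h) = -(c i*h)/2 + c i*b1 i - s i*b0 i + h/2 := by
          rw [hvpi]
          have := (hc0 i).ne'
          field_simp
          ring
        rw [e, abs_le]
        constructor <;> linarith [hch.1, hch.2]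
    -- ordering of consecutive slices
    have horder : ∀ k (hk1 : k < n) (hk2 : k+1 < n), v ⟨k, hk1⟩ ≤ u ⟨k+1, hk2⟩ := by
      intro k hk1 hk2
      by_contra hlt
      push_neg at hlt
      set i : Fin n := ⟨k, hk1⟩ with hi
      set j : Fin n := ⟨k+1, hk2⟩ with hj
      have hiR : (i:ℝ) = (k:ℝ) := by rw [hi]
      have hjR : (j:ℝ) = (k:ℝ)+1 := by rw [hj]; push_cast; ring
      have hd1 := abs_le.mp (hdev i).1
      have hd2 := abs_le.mp (hdev j).2
      have huivj : u i < v j := by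
        rw [hiR] at hd1; rw [hjR] at hd2
        nlinarith [hd1.2, hd2.1]
      have hmaxmin : max (u i) (u j) < min (v i) (v j) :=
        max_lt (lt_min (huv_lt i) huivj) (lt_min hlt (huv_lt j))
      set ystar : ℝ := (max (u i) (u j) + min (v i) (v j))/2 with hystar
      have hy1 : u i < ystar := by
        have := le_max_left (u i) (u j); rw [hystar]; linarith
      have hy2 : u j < ystar := by
        have := le_max_right (u i) (u j); rw [hystar]; linarith
      have hy3 : ystar < v i := by
        have := min_le_left (v i) (v j); rw [hystar]; linarith
      have hy4 : ystar < v j := by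
        have := min_le_right (v i) (v j); rw [hystar]; linarith
      have hmem1 : pt (w/2) ystar ∈ interior (g i t '' R i) := by
        rw [hR i]
        exact mem_interior_slice w h (i:ℝ) hh hhw (g i t) (hiso i t)
          (c i) (s i) (b0 i) (b1 i) (hcs i) (hcge i) (hs1 i) (hb0 i) (hb1 i) (hform i)
          ystar (by rw [← hupi]; exact hy1) (by rw [← hvpi]; exact hy3)
      have hmem2 : pt (w/2) ystar ∈ interior (g j t '' R j) := by
        rw [hR j]
        exact mem_interior_slice w h (j:ℝ) hh hhw (g j t) (hiso j t)
          (c j) (s j) (b0 j) (b1 j) (hcs j) (hcge j) (hs1 j) (hb0 j) (hb1 j) (hform j)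
          ystar (by rw [← hupi]; exact hy2) (by rw [← hvpi]; exact hy4)
      have hij : i ≠ j := by
        rw [hi, hj]
        intro hcon
        have := Fin.mk.injEq k hk1 (k+1) hk2 ▸ hcon
        omega
      exact Set.disjoint_left.mp (hdisj t hij) hmem1 hmem2
    -- chain A
    have hchainA : ∀ k (hk : k < n), (k:ℝ)*h ≤ u ⟨k, hk⟩ := by
      intro k
      induction k with
      | zero =>
        intro hk
        have := (hstrip ⟨0, hk⟩).1.1
        norm_num
        exact this
      | succ k ih =>
        intro hk
        have hk' : k < n := by omega
        have h1 := horder k hk' hk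
        have h2 := hvu ⟨k, hk'⟩
        have h3 := hhc ⟨k, hk'⟩
        have h4 := ih hk'
        push_cast
        linarith
    -- chain B
    have hchainB : ∀ d k (hk : k < n), k + d + 1 = n → v ⟨k, hk⟩ ≤ ((k:ℝ)+1)*h := by
      intro d
      induction d with
      | zero =>
        intro k hk heq
        have h1 := (hstrip ⟨k, hk⟩).2.2
        have h2 : ((k:ℝ)+1) = (n:ℝ) := by
          have : k + 1 = n := by omega
          push_cast [← this]
          ring
        rw [h2]
        exact h1
      | succ d ihd =>
        intro k hk heq
        have hk2 : k + 1 < n := by omega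
        have h1 := horder k hk hk2
        have h2 := hvu ⟨k+1, hk2⟩
        have h3 := hhc ⟨k+1, hk2⟩
        have h4 := ihd (k+1) hk2 (by omega)
        push_cast at h4 ⊢
        linarith
    -- conclusion per piece
    intro i
    have hAi : (i:ℝ)*h ≤ u i := by
      have := hchainA i.1 i.2
      simpa using this
    have hBi : v i ≤ ((i:ℝ)+1)*h := by
      have := hchainB (n - 1 - i.1) i.1 i.2 (by omega)
      simpa using this
    have h5 : h / c i ≤ h := by
      have := hvu i
      linarith
    have h7 : 1 ≤ c i := by
      rw [div_le_iff₀ (hc0 i)] at h5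
      nlinarith
    have hceq : c i = 1 := le_antisymm (hcle1 i) h7
    have hseq : s i = 0 := by
      have h8 : s i ^ 2 = 0 := by nlinarith [hcs i]
      exact pow_eq_zero_iff (by norm_num) |>.mp h8
    have huval : u i = (i:ℝ)*h + b1 i := by
      rw [hupi, hceq, hseq]; ring
    have hvval : v i = ((i:ℝ)+1)*h + b1 i := by
      rw [hvpi, hceq, hseq]; ring
    have hb1eq : b1 i = 0 := by
      rw [huval] at hAi; rw [hvval] at hBi
      linarith
    refine ⟨b0 i, fun p => ⟨?_, ?_⟩⟩
    · rw [hform i p, pt_apply0, hceq, hseq]; ring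
    · rw [hform i p, pt_apply1, hceq, hseq, hb1eq]; ring
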